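/- In the setting of Problem 1, choose μ > 0, α̲ > 0 and β ≥ 0 satisfying μ(σ − L_{∇g}α̲) > β(μ² + 1), define M_1 = (σ − ᾱL_{∇g})/(2ᾱ) − μβ/(2α̲) and M_2 = β/(2μα̲), choose ᾱ > α̲ such that M_1 > M_2, assume f + g is coercive, and let (x_n)_{n∈ℕ} be a sequence generated by Algorithm 1. Define H : ℝ^m × ℝ^m → (−∞,+∞] by H(x,y) = (f+g)(x) + M_2‖x−y‖². Then with M = M_1 − M_2 > 0 one has H(x_{n+1}, x_n) + M‖x_{n+1} − x_n‖² ≤ H(x_n, x_{n−1}) for all n ≥ 1. -/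

import Mathlib

open Filter Topology RealInnerProductSpace

noncomputable section

variable {E : Type*} [NormedAddCommGroup E] [InnerProductSpace ℝ E]

/-- The Fréchet (viscosity) subdifferential of an extended-real-valued function `h` at `x`:
`v` belongs to it iff `x ∈ dom h` and
`liminf_{y → x} (h y - h x - ⟪v, y - x⟫)/‖y - x‖ ≥ 0`, expressed equivalently by the
epsilon-characterization of the liminf. -/
def frechetSubdiff (h : E → EReal) (x : E) : Set E :=
  {v | h x ≠ ⊤ ∧ ∀ ε : ℝ, 0 < ε →
    ∀ᶠ y in 𝓝 x, (((h x).toReal + ⟪v, y - x⟫ - ε * ‖y - x‖ : ℝ) : EReal) ≤ h y}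

/-- The limiting (Mordukhovich) subdifferential of `h` at `x`. -/
def limitingSubdiff (h : E → EReal) (x : E) : Set E :=
  {v | h x ≠ ⊤ ∧ ∃ xk vk : ℕ → E,
    Tendsto xk atTop (𝓝 x) ∧
    Tendsto (fun k => h (xk k)) atTop (𝓝 (h x)) ∧
    (∀ k, vk k ∈ frechetSubdiff h (xk k)) ∧
    Tendsto vk atTop (𝓝 v)}


lemma line_hasDerivAt {E : Type*} [NormedAddCommGroup E] [InnerProductSpace ℝ E] [CompleteSpace E]
    (g : E → ℝ) (hg : Differentiable ℝ g) (x d : E) (t : ℝ) :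
    HasDerivAt (fun s : ℝ => g (x + s • d)) ⟪gradient g (x + t • d), d⟫ t := by
  have h1 : HasDerivAt (fun s : ℝ => x + s • d) d t := by
    simpa using ((hasDerivAt_id t).smul_const d).const_add x
  have h2 := (hasGradientAt_iff_hasFDerivAt.mp (hg (x + t • d)).hasGradientAt)
  have h3 := h2.comp_hasDerivAt t h1
  simpa [InnerProductSpace.toDual_apply_apply, Function.comp_def] using h3

/-- descent lemma -/
lemma descent_lemma {E : Type*} [NormedAddCommGroup E] [InnerProductSpace ℝ E] [CompleteSpace E]
    (g : E → ℝ) (L : ℝ) (hL : 0 ≤ L) (hg : Differentiable ℝ g)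
    (hlip : ∀ z w, ‖gradient g z - gradient g w‖ ≤ L * ‖z - w‖) (x y : E) :
    g y ≤ g x + ⟪gradient g x, y - x⟫ + L / 2 * ‖y - x‖ ^ 2 := by
  set d := y - x with hd
  set ψ : ℝ → ℝ := fun t => g (x + t • d) - t * ⟪gradient g x, d⟫ - L / 2 * ‖d‖ ^ 2 * t ^ 2
    with hψ
  have hder : ∀ t : ℝ, HasDerivAt ψ
      (⟪gradient g (x + t • d), d⟫ - ⟪gradient g x, d⟫ - L / 2 * ‖d‖ ^ 2 * (2 * t)) t := by
    intro t
    exact ((line_hasDerivAt g hg x d t).sub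
      (by simpa using hasDerivAt_mul_const (⟪gradient g x, d⟫ : ℝ))).sub
      (by simpa using (hasDerivAt_pow 2 t).const_mul (L / 2 * ‖d‖ ^ 2))
  have han : AntitoneOn ψ (Set.Icc (0:ℝ) 1) := by
    apply antitoneOn_of_deriv_nonpos (convex_Icc 0 1)
    · exact fun t _ => (hder t).continuousAt.continuousWithinAt
    · exact fun t _ => (hder t).differentiableAt.differentiableWithinAt
    · intro t ht
      rw [interior_Icc, Set.mem_Ioo] at ht
      rw [(hder t).deriv]
      have h1 : ⟪gradient g (x + t • d) - gradient g x, d⟫ ≤ L * t * ‖d‖ ^ 2 := by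
        calc ⟪gradient g (x + t • d) - gradient g x, d⟫
            ≤ ‖gradient g (x + t • d) - gradient g x‖ * ‖d‖ := real_inner_le_norm _ _
          _ ≤ L * ‖(x + t • d) - x‖ * ‖d‖ := by
              have := hlip (x + t • d) x
              exact mul_le_mul_of_nonneg_right this (norm_nonneg _)
          _ = L * t * ‖d‖ ^ 2 := by
              have : ‖(x + t • d) - x‖ = t * ‖d‖ := by
                simp [norm_smul, abs_of_pos ht.1]
              rw [this]; ring
      rw [inner_sub_left] at h1
      nlinarith
  have h01 := han (Set.mem_Icc.mpr ⟨le_refl 0, zero_le_one⟩)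
    (Set.mem_Icc.mpr ⟨zero_le_one, le_refl 1⟩) zero_le_one
  have hsimp0 : ψ 0 = g x := by simp [hψ]
  have hsimp1 : ψ 1 = g y - ⟪gradient g x, d⟫ - L / 2 * ‖d‖ ^ 2 := by
    simp [hψ, hd]
  rw [hsimp0, hsimp1] at h01
  linarith

/-- strong convexity lower bound -/
lemma strong_convex_bound {E : Type*} [NormedAddCommGroup E] [InnerProductSpace ℝ E] [CompleteSpace E]
    (F : E → ℝ) (σ : ℝ) (hF : Differentiable ℝ F)
    (hconv : ConvexOn ℝ Set.univ fun z => F z - σ / 2 * ‖z‖ ^ 2) (x y : E) :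
    F x + ⟪gradient F x, y - x⟫ + σ / 2 * ‖y - x‖ ^ 2 ≤ F y := by
  set d := y - x with hd
  set φ : ℝ → ℝ := fun t => F (x + t • d) - σ / 2 * (‖x‖ ^ 2 + 2 * t * ⟪x, d⟫ + t ^ 2 * ‖d‖ ^ 2)
    with hφ
  have hnorm : ∀ t : ℝ, ‖x + t • d‖ ^ 2 = ‖x‖ ^ 2 + 2 * t * ⟪x, d⟫ + t ^ 2 * ‖d‖ ^ 2 := by
    intro t
    rw [norm_add_sq_real, real_inner_smul_right, norm_smul]
    simp [mul_pow, sq_abs]; ring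
  have hconvφ : ConvexOn ℝ Set.univ φ := by
    have := hconv.comp_affineMap (AffineMap.lineMap (x : E) (x + d))
    have heq : φ = (fun z => F z - σ / 2 * ‖z‖ ^ 2) ∘ (AffineMap.lineMap (x : E) (x + d)) := by
      funext t
      have hl : (AffineMap.lineMap (x : E) (x + d)) t = x + t • d := by
        simp [AffineMap.lineMap_apply]; abel
      simp only [Function.comp_apply, hl, hφ, hnorm t]
    rw [heq]
    simpa using this
  have hderφ : HasDerivAt φ (⟪gradient F x, d⟫ - σ / 2 * (2 * ⟪x, d⟫)) 0 := by
    have h1 := line_hasDerivAt F hF x d 0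
    simp only [zero_smul, add_zero] at h1
    have h2 : HasDerivAt (fun t : ℝ => σ / 2 * (‖x‖ ^ 2 + 2 * t * ⟪x, d⟫ + t ^ 2 * ‖d‖ ^ 2))
        (σ / 2 * (2 * ⟪x, d⟫)) 0 := by
      have : HasDerivAt (fun t : ℝ => ‖x‖ ^ 2 + 2 * t * ⟪x, d⟫ + t ^ 2 * ‖d‖ ^ 2)
          (2 * ⟪x, d⟫) 0 := by
        have ha : HasDerivAt (fun t : ℝ => 2 * t * ⟪x, d⟫) (2 * ⟪x, d⟫) 0 := by
          simpa [mul_comm, mul_assoc] using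
            ((hasDerivAt_id (0:ℝ)).const_mul 2).mul_const ⟪x, d⟫
        have hb : HasDerivAt (fun t : ℝ => t ^ 2 * ‖d‖ ^ 2) 0 0 := by
          simpa using (hasDerivAt_pow 2 (0:ℝ)).mul_const (‖d‖ ^ 2)
        exact ((ha.const_add (‖x‖ ^ 2)).add hb).congr_deriv (add_zero _)
      simpa using this.const_mul (σ / 2)
    exact h1.sub h2
  have := ConvexOn.le_slope_of_hasDerivAt (S := Set.univ) hconvφ (Set.mem_univ 0) (Set.mem_univ 1)
    zero_lt_one hderφ
  have hφ0 : φ 0 = F x - σ / 2 * ‖x‖ ^ 2 := by simp [hφ]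
  have hxd : x + d = y := by rw [hd]; abel
  have hφ1 : φ 1 = F y - σ / 2 * (‖x‖ ^ 2 + 2 * ⟪x, d⟫ + ‖d‖ ^ 2) := by
    simp [hφ, hxd]
  rw [slope_def_field, hφ0, hφ1] at this
  norm_num at this
  have hgF : (fderiv ℝ F x) d = ⟪gradient F x, d⟫ := by
    rw [gradient, InnerProductSpace.toDual_symm_apply]
  linarith [this]

set_option maxHeartbeats 1000000 in
/-- Lemma 3.5 (H1): with `M = M1 - M2 > 0` and `H(x,y) = (f+g)(x) + M2‖x-y‖²`, one has
`H(x_{n+1}, x_n) + M‖x_{n+1} - x_n‖² ≤ H(x_n, x_{n-1})` for all `n ≥ 1`. -/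
theorem stmt10
    (m : ℕ)
    (f : EuclideanSpace ℝ (Fin m) → EReal)
    -- `f` is proper (never `⊥`, somewhere finite), lower semicontinuous and bounded below
    (hfbot : ∀ z, f z ≠ ⊥) (hfproper : ∃ z, f z ≠ ⊤)
    (hflsc : LowerSemicontinuous f)
    (hfbdd : ∃ cl : ℝ, ∀ z, (cl : EReal) ≤ f z)
    -- `g` is differentiable with `Lg`-Lipschitz gradient
    (g : EuclideanSpace ℝ (Fin m) → ℝ) (Lg : ℝ) (hLg : 0 ≤ Lg)
    (hgdiff : Differentiable ℝ g)
    (hglip : ∀ z w, ‖gradient g z - gradient g w‖ ≤ Lg * ‖z - w‖)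
    -- `F` is `σ`-strongly convex and differentiable with `LF`-Lipschitz gradient
    (F : EuclideanSpace ℝ (Fin m) → ℝ) (σ LF : ℝ) (hσ : 0 < σ) (hLF : 0 < LF)
    (hFconv : ConvexOn ℝ Set.univ fun z => F z - σ / 2 * ‖z‖ ^ 2)
    (hFdiff : Differentiable ℝ F)
    (hFlip : ∀ z w, ‖gradient F z - gradient F w‖ ≤ LF * ‖z - w‖)
    -- parameters of the algorithm
    (αlo αhi β : ℝ) (hαlo : 0 < αlo) (hαorder : αlo ≤ αhi) (hβ : 0 ≤ β)
    (α βs : ℕ → ℝ)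
    (hα : ∀ n, 1 ≤ n → αlo ≤ α n ∧ α n ≤ αhi)
    (hβs : ∀ n, 1 ≤ n → 0 ≤ βs n ∧ βs n ≤ β)
    -- the sequence generated by Algorithm 1:
    -- `x (n+1)` minimizes `u ↦ D_F(u, x n) + α n • ⟪u, ∇g(x n)⟫ + βs n • ⟪u, x (n-1) - x n⟫ + α n • f u`
    (x : ℕ → EuclideanSpace ℝ (Fin m))
    (halg : ∀ n, 1 ≤ n → ∀ u,
      ((F (x (n + 1)) - F (x n) - ⟪gradient F (x n), x (n + 1) - x n⟫
          + α n * ⟪x (n + 1), gradient g (x n)⟫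
          + βs n * ⟪x (n + 1), x (n - 1) - x n⟫ : ℝ) : EReal)
        + (α n : EReal) * f (x (n + 1))
      ≤ ((F u - F (x n) - ⟪gradient F (x n), u - x n⟫
          + α n * ⟪u, gradient g (x n)⟫
          + βs n * ⟪u, x (n - 1) - x n⟫ : ℝ) : EReal)
        + (α n : EReal) * f u)
    -- the parameters `μ, αlo, β` satisfy `μ(σ - Lg·αlo) > β(μ² + 1)` and `αhi` is chosen
    -- with `αlo < αhi` such that `M1 > M2`
    (μ : ℝ) (hμ : 0 < μ)
    (hcond : β * (μ ^ 2 + 1) < μ * (σ - Lg * αlo))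
    (M1 M2 : ℝ)
    (hM1 : M1 = (σ - αhi * Lg) / (2 * αhi) - μ * β / (2 * αlo))
    (hM2 : M2 = β / (2 * μ * αlo))
    (hαstrict : αlo < αhi) (hM : M2 < M1)

    -- `f + g` is coercive
    (hcoer : Tendsto (fun z => f z + ((g z : ℝ) : EReal))
      (comap (fun z : EuclideanSpace ℝ (Fin m) => ‖z‖) atTop) (𝓝 ⊤))
    :
    0 < M1 - M2 ∧
    ∀ n, 1 ≤ n →
      f (x (n + 1)) + ((g (x (n + 1)) + M2 * ‖x (n + 1) - x n‖ ^ 2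
          + (M1 - M2) * ‖x (n + 1) - x n‖ ^ 2 : ℝ) : EReal)
      ≤ f (x n) + ((g (x n) + M2 * ‖x n - x (n - 1)‖ ^ 2 : ℝ) : EReal) := by
  refine ⟨by linarith, fun n hn => ?_⟩
  obtain ⟨ha1, ha2⟩ := hα n hn
  obtain ⟨hb1, hb2⟩ := hβs n hn
  set a := α n with hadef
  set b := βs n with hbdef
  set p := x (n + 1) with hpdef
  set q := x n with hqdef
  set r := x (n - 1) with hrdef
  have ha0 : 0 < a := lt_of_lt_of_le hαlo ha1
  by_cases hq : f q = ⊤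
  · rw [hq, EReal.top_add_coe]; exact le_top
  have hfqr : ((f q).toReal : EReal) = f q := EReal.coe_toReal hq (hfbot q)
  set fq := (f q).toReal with hfqdef
  have hn' := halg n hn q
  rw [← hpdef, ← hqdef, ← hrdef, ← hadef, ← hbdef] at hn'
  have hp : f p ≠ ⊤ := by
    intro hp
    rw [hp, ← hfqr] at hn'
    rw [EReal.mul_top_of_pos (by exact_mod_cast ha0)] at hn'
    rw [EReal.coe_add_top] at hn'
    rw [← EReal.coe_mul, ← EReal.coe_add] at hn'
    exact EReal.coe_ne_top _ (top_le_iff.mp hn')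
  have hfpr : ((f p).toReal : EReal) = f p := EReal.coe_toReal hp (hfbot p)
  set fp := (f p).toReal with hfpdef
  rw [← hfpr, ← hfqr] at hn' ⊢
  rw [← EReal.coe_mul, ← EReal.coe_mul, ← EReal.coe_add, ← EReal.coe_add,
    EReal.coe_le_coe_iff] at hn'
  rw [← EReal.coe_add, ← EReal.coe_add, EReal.coe_le_coe_iff]
  -- now a purely real goal
  have hSnn : 0 ≤ (‖p - q‖ ^ 2) := sq_nonneg _
  have hTnn : 0 ≤ (‖q - r‖ ^ 2) := sq_nonneg _
  have hsc := strong_convex_bound F σ hFdiff hFconv q p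
  have hdes := descent_lemma g Lg hLg hgdiff hglip q p
  have hCS : ⟪p - q, q - r⟫ ≤ ‖p - q‖ * ‖q - r‖ := real_inner_le_norm _ _
  have hAM : ‖p - q‖ * ‖q - r‖ ≤ μ / 2 * (‖p - q‖ ^ 2) + 1 / (2 * μ) * (‖q - r‖ ^ 2) := by
    have h1 : 0 < 2 * μ := by linarith
    have h2 : 2 * μ * (‖p - q‖ * ‖q - r‖) ≤ 2 * μ * (μ / 2 * (‖p - q‖ ^ 2) + 1 / (2 * μ) * (‖q - r‖ ^ 2)) := by
      have he : 2 * μ * (μ / 2 * (‖p - q‖ ^ 2) + 1 / (2 * μ) * (‖q - r‖ ^ 2)) = μ ^ 2 * (‖p - q‖ ^ 2) + (‖q - r‖ ^ 2) := by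
        field_simp
      rw [he]
      nlinarith [sq_nonneg (μ * ‖p - q‖ - ‖q - r‖)]
    exact le_of_mul_le_mul_left h2 h1
  have hi1 : ⟪p, gradient g q⟫ - ⟪q, gradient g q⟫ = ⟪p - q, gradient g q⟫ :=
    (inner_sub_left _ _ _).symm
  have hi2 : ⟪p, r - q⟫ - ⟪q, r - q⟫ = ⟪p - q, r - q⟫ := (inner_sub_left _ _ _).symm
  have hi3 : ⟪p - q, r - q⟫ = -⟪p - q, q - r⟫ := by rw [← inner_neg_right, neg_sub]
  have hi4 : ⟪gradient g q, p - q⟫ = ⟪p - q, gradient g q⟫ := real_inner_comm _ _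
  have hz : ⟪gradient F q, q - q⟫ = (0 : ℝ) := by simp
  -- parameter inequalities
  have hαhi0 : 0 < αhi := lt_of_lt_of_le hαlo hαorder
  have hM2nn : 0 ≤ M2 := by rw [hM2]; positivity
  have hM1pos : 0 < M1 := lt_of_le_of_lt hM2nn hM
  have hQnn : 0 ≤ μ * β / (2 * αlo) := by positivity
  have hPpos : 0 < (σ - αhi * Lg) / (2 * αhi) := by rw [hM1] at hM1pos; linarith
  have key1 : a * M1 + (a * Lg - σ) / 2 + b * μ / 2 ≤ 0 := by
    rw [hM1]
    have f1 : a * ((σ - αhi * Lg) / (2 * αhi)) ≤ αhi * ((σ - αhi * Lg) / (2 * αhi)) :=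
      mul_le_mul_of_nonneg_right ha2 hPpos.le
    have f2 : αhi * ((σ - αhi * Lg) / (2 * αhi)) = (σ - αhi * Lg) / 2 := by
      field_simp
    have f3 : αlo * (μ * β / (2 * αlo)) ≤ a * (μ * β / (2 * αlo)) :=
      mul_le_mul_of_nonneg_right ha1 hQnn
    have f4 : αlo * (μ * β / (2 * αlo)) = μ * β / 2 := by field_simp
    have f5 : a * Lg ≤ αhi * Lg := mul_le_mul_of_nonneg_right ha2 hLg
    have f6 : b * μ ≤ β * μ := mul_le_mul_of_nonneg_right hb2 hμ.le
    linarith [f1, f2, f3, f4, f5, f6]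
  have key2 : b / (2 * μ) ≤ a * M2 := by
    rw [hM2]
    have g1 : αlo * (β / (2 * μ * αlo)) = β / (2 * μ) := by field_simp
    have g2 : αlo * (β / (2 * μ * αlo)) ≤ a * (β / (2 * μ * αlo)) :=
      mul_le_mul_of_nonneg_right ha1 (by positivity)
    have g3 : b / (2 * μ) ≤ β / (2 * μ) := by
      apply div_le_div_of_nonneg_right hb2 (by linarith)
    linarith
  -- assemble
  have hdes2 : a * g p ≤ a * (g q + ⟪p - q, gradient g q⟫ + Lg / 2 * (‖p - q‖ ^ 2)) := by
    rw [← hi4]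
    exact mul_le_mul_of_nonneg_left hdes ha0.le
  have hb3 : b * ⟪p - q, q - r⟫ ≤ b * (μ / 2 * (‖p - q‖ ^ 2) + 1 / (2 * μ) * (‖q - r‖ ^ 2)) :=
    mul_le_mul_of_nonneg_left (hCS.trans hAM) hb1
  have k1 : (a * M1 + (a * Lg - σ) / 2 + b * μ / 2) * (‖p - q‖ ^ 2) ≤ 0 :=
    mul_nonpos_of_nonpos_of_nonneg key1 hSnn
  have k2 : b / (2 * μ) * (‖q - r‖ ^ 2) ≤ a * M2 * (‖q - r‖ ^ 2) := mul_le_mul_of_nonneg_right key2 hTnn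
  -- final real inequality
  have e1 : a * ⟪p, gradient g q⟫ - a * ⟪q, gradient g q⟫ = a * ⟪p - q, gradient g q⟫ := by
    rw [← mul_sub, hi1]
  have e2 : b * ⟪p, r - q⟫ - b * ⟪q, r - q⟫ = -(b * ⟪p - q, q - r⟫) := by
    rw [← mul_sub, hi2, hi3]; ring
  have hmul : a * (fp + (g p + M2 * (‖p - q‖ ^ 2) + (M1 - M2) * (‖p - q‖ ^ 2))) ≤ a * (fq + (g q + M2 * (‖q - r‖ ^ 2))) := by
    ring_nf at hn' e1 e2 hz hsc hdes2 hb3 k1 k2 ⊢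
    linarith [hn', e1, e2, hz, hsc, hdes2, hb3, k1, k2]
  exact le_of_mul_le_mul_left hmul ha0
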